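/- Suppose {m_k}_{k≥1} is obtained from {κ_l}_{l≥1} via m_k = Σ_{π ∈ P(k)} W(π) Π_{B∈π} κ_{|B|} with γ-weights W(π), and {c_l} are the classical cumulants of {m_k} defined by Σ_{l≥1} c_l y^l / l! = log(1 + Σ_{k≥1} m_k y^k / k!). If κ_l^0 = lim_{γ→0} κ_l (where {κ_l} = (T^γ)^{-1}({m_k}) for the same fixed moment sequence), then κ_l^0 = c_l / (l-1)! for every l ≥ 1. -/

import Mathlib

/-- A set partition of `{1, …, k}` (modeled as `Fin k`): a collection of nonempty,
pairwise disjoint blocks whose union is everything. -/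
def IsSetPartition (k : ℕ) (π : Finset (Finset (Fin k))) : Prop :=
  (∀ B ∈ π, B.Nonempty) ∧ (∀ B ∈ π, ∀ C ∈ π, B ≠ C → Disjoint B C) ∧
    π.sup id = Finset.univ

instance (k : ℕ) : DecidablePred (IsSetPartition k) := fun π => by
  unfold IsSetPartition; infer_instance

/-- The finite set of all set partitions of `{1, …, k}`. -/
def setPartitions (k : ℕ) : Finset (Finset (Finset (Fin k))) :=
  Finset.univ.filter (IsSetPartition k)

/-- `pval π B` is the statistic `p` of the block `B` in the set partition `π`:
the number of "roofs" of `B`, i.e. pairs of consecutive elements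
`u < v` of `B`, such that some element strictly between `u` and `v` belongs to an
earlier block (a block whose minimum is smaller than the minimum of `B`). -/
def pval {k : ℕ} (π : Finset (Finset (Fin k))) (B : Finset (Fin k)) : ℕ :=
  (Finset.univ.filter (fun uv : Fin k × Fin k =>
    uv.1 ∈ B ∧ uv.2 ∈ B ∧ uv.1 < uv.2 ∧ (∀ w ∈ B, ¬(uv.1 < w ∧ w < uv.2)) ∧
      ∃ x : Fin k, uv.1 < x ∧ x < uv.2 ∧
        ∃ B' ∈ π, x ∈ B' ∧ B'.min < B.min)).card

/-- The complementary statistic `q = |B| - 1 - p`. -/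
def qval {k : ℕ} (π : Finset (Finset (Fin k))) (B : Finset (Fin k)) : ℕ :=
  B.card - 1 - pval π B

/-- The γ-weight `W(π) = ∏_i p(i)! ⬝ (γ + p(i) + 1)_{q(i)}` of a set partition. -/
noncomputable def Wweight {k : ℕ} (γ : ℝ) (π : Finset (Finset (Fin k))) : ℝ :=
  ∏ B ∈ π, ((pval π B).factorial : ℝ) *
    (ascPochhammer ℝ (qval π B)).eval (γ + (pval π B : ℝ) + 1)

/-- Exponential of a formal power series with zero constant term:
`exp f = Σ_j f^j / j!`, defined coefficient-wise. -/
noncomputable def expPS (f : PowerSeries ℝ) : PowerSeries ℝ :=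
  PowerSeries.mk fun n =>
    ∑ j ∈ Finset.range (n + 1), PowerSeries.coeff n (f ^ j) / (j.factorial : ℝ)


open Finset

namespace GammaAux


/-- partitions of an arbitrary subset `S` of `Fin n`. -/
def partsOf {n : ℕ} (S : Finset (Fin n)) : Finset (Finset (Finset (Fin n))) :=
  Finset.univ.filter fun π => (∀ B ∈ π, B.Nonempty) ∧
    (∀ B ∈ π, ∀ C ∈ π, B ≠ C → Disjoint B C) ∧ π.sup id = S

lemma mem_partsOf {n : ℕ} {S : Finset (Fin n)} {π : Finset (Finset (Fin n))} :
    π ∈ partsOf S ↔ (∀ B ∈ π, B.Nonempty) ∧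
      (∀ B ∈ π, ∀ C ∈ π, B ≠ C → Disjoint B C) ∧ π.sup id = S := by
  simp [partsOf]

lemma mem_setPartitions {k : ℕ} {π : Finset (Finset (Fin k))} :
    π ∈ setPartitions k ↔ (∀ B ∈ π, B.Nonempty) ∧
      (∀ B ∈ π, ∀ C ∈ π, B ≠ C → Disjoint B C) ∧ π.sup id = Finset.univ := by
  simp [setPartitions, IsSetPartition]

/-- the partition-weighted moment sum -/
noncomputable def M (a : ℕ → ℝ) (k : ℕ) : ℝ :=
  ∑ π ∈ setPartitions k, ∏ B ∈ π, a B.card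

lemma setPartitions_zero : setPartitions 0 = {∅} := by
  ext π
  simp only [mem_setPartitions, mem_singleton]
  constructor
  · rintro ⟨h1, -, -⟩
    rw [eq_empty_iff_forall_notMem]
    intro B hB
    obtain ⟨x, -⟩ := h1 B hB
    exact x.elim0
  · rintro rfl
    refine ⟨by simp, by simp, ?_⟩
    simp [Finset.univ_eq_empty]

lemma M_zero (a : ℕ → ℝ) : M a 0 = 1 := by
  rw [M, setPartitions_zero]; simp

lemma pval_le {k : ℕ} (π : Finset (Finset (Fin k))) {B : Finset (Fin k)}
    (hB : B.Nonempty) : pval π B ≤ B.card - 1 := by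
  classical
  have h : pval π B ≤ (B.erase (B.max' hB)).card := by
    apply Finset.card_le_card_of_injOn Prod.fst
    · rintro ⟨u, v⟩ huv
      simp only [Finset.coe_filter, Finset.mem_coe, Set.mem_setOf_eq, Finset.mem_filter, Finset.mem_univ, true_and] at huv
      obtain ⟨hu, hv, hlt, -, -⟩ := huv
      exact Finset.mem_erase.2 ⟨ne_of_lt (lt_of_lt_of_le hlt (B.le_max' v hv)), hu⟩
    · rintro ⟨u, v⟩ huv ⟨u', v'⟩ huv' (h1 : u = u')
      simp only [Finset.coe_filter, Set.mem_setOf_eq, Finset.mem_univ, true_and] at huv huv'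
      obtain ⟨hu, hv, hlt, hcons, -⟩ := huv
      obtain ⟨hu', hv', hlt', hcons', -⟩ := huv'
      subst h1
      have : v = v' := by
        rcases lt_trichotomy v v' with h | h | h
        · exact absurd ⟨hlt, h⟩ (hcons' v hv)
        · exact h
        · exact absurd ⟨hlt', h⟩ (hcons v' hv')
      simp [this]
  calc pval π B ≤ _ := h
    _ = B.card - 1 := Finset.card_erase_of_mem (B.max'_mem hB)

lemma Wweight_zero {k : ℕ} (π : Finset (Finset (Fin k)))
    (hπ : ∀ B ∈ π, B.Nonempty) :
    Wweight 0 π = ∏ B ∈ π, ((B.card - 1).factorial : ℝ) := by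
  refine Finset.prod_congr rfl fun B hB => ?_
  have hp : pval π B ≤ B.card - 1 := pval_le π (hπ B hB)
  have hq : pval π B + qval π B = B.card - 1 := by
    rw [qval]; omega
  have := factorial_mul_ascPochhammer ℝ (pval π B) (qval π B)
  rw [zero_add]
  rw [this, hq]

lemma sum_partsOf (a : ℕ → ℝ) {n s : ℕ} (S : Finset (Fin n)) (hS : S.card = s) :
    ∑ σ ∈ partsOf S, ∏ B ∈ σ, a B.card = M a s := by
  classical
  set e : Fin s ↪o Fin n := S.orderEmbOfFin hS with he
  have hrange : ∀ x : Fin n, x ∈ S ↔ ∃ y, e y = x := by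
    intro x
    constructor
    · intro hx
      have hx' : x ∈ Set.range e := by
        rw [he, Finset.range_orderEmbOfFin S hS]; exact hx
      exact hx'
    · rintro ⟨y, rfl⟩; exact Finset.orderEmbOfFin_mem S hS y
  rw [M]
  symm
  refine Finset.sum_bij (fun π _ => π.map (Finset.mapEmbedding e.toEmbedding).toEmbedding)
    ?_ ?_ ?_ ?_
  · -- maps into partsOf S
    intro π hπ
    rw [mem_setPartitions] at hπ
    obtain ⟨h1, h2, h3⟩ := hπ
    rw [mem_partsOf]
    refine ⟨?_, ?_, ?_⟩
    · intro B hB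
      simp only [Finset.mem_map, Finset.mapEmbedding_apply] at hB
      obtain ⟨C, hC, rfl⟩ := hB
      exact (h1 C hC).map
    · intro B hB C hC hne
      simp only [Finset.mem_map, Finset.mapEmbedding_apply] at hB hC
      obtain ⟨B', hB', rfl⟩ := hB
      obtain ⟨C', hC', rfl⟩ := hC
      have : B' ≠ C' := fun h => hne (by rw [h])
      exact Finset.disjoint_map _ |>.2 (h2 B' hB' C' hC' this)
    · ext x
      simp only [Finset.mem_sup, Finset.mem_map, Finset.mapEmbedding_apply, id]
      constructor
      · rintro ⟨B, ⟨C, hC, rfl⟩, hx⟩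
        obtain ⟨y, -, rfl⟩ := Finset.mem_map.1 hx
        exact (hrange _).2 ⟨y, rfl⟩
      · intro hx
        obtain ⟨y, rfl⟩ := (hrange x).1 hx
        have : y ∈ π.sup id := by rw [h3]; exact Finset.mem_univ y
        obtain ⟨B, hB, hyB⟩ := Finset.mem_sup.1 this
        exact ⟨B.map e.toEmbedding, ⟨B, hB, rfl⟩, Finset.mem_map_of_mem _ hyB⟩
  · -- injective
    intro π1 h1 π2 h2 h
    exact (Finset.mapEmbedding _).toEmbedding.injective h
  · -- surjective
    intro σ hσ
    rw [mem_partsOf] at hσ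
    obtain ⟨h1, h2, h3⟩ := hσ
    have hsub : ∀ B ∈ σ, ∀ x ∈ B, x ∈ S := by
      intro B hB x hx
      rw [← h3]
      exact Finset.mem_sup.2 ⟨B, hB, hx⟩
    set g : Finset (Fin n) → Finset (Fin s) :=
      fun B => B.preimage e (e.toEmbedding.injective.injOn) with hg
    have hge : ∀ B ∈ σ, (g B).map e.toEmbedding = B := by
      intro B hB
      rw [hg, Finset.map_eq_image]
      ext x
      simp only [Finset.mem_image, Finset.mem_preimage]
      constructor
      · rintro ⟨y, hy, rfl⟩; exact hy
      · intro hx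
        obtain ⟨y, rfl⟩ := (hrange x).1 (hsub B hB x hx)
        exact ⟨y, hx, rfl⟩
    refine ⟨σ.image g, ?_, ?_⟩
    · rw [mem_setPartitions]
      refine ⟨?_, ?_, ?_⟩
      · intro B hB
        simp only [Finset.mem_image] at hB
        obtain ⟨C, hC, rfl⟩ := hB
        obtain ⟨x, hx⟩ := h1 C hC
        obtain ⟨y, rfl⟩ := (hrange x).1 (hsub C hC x hx)
        exact ⟨y, Finset.mem_preimage.2 hx⟩
      · intro B hB C hC hne
        simp only [Finset.mem_image] at hB hC
        obtain ⟨B', hB', rfl⟩ := hB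
        obtain ⟨C', hC', rfl⟩ := hC
        have hne' : B' ≠ C' := by
          rintro rfl; exact hne rfl
        have := h2 B' hB' C' hC' hne'
        rw [Finset.disjoint_left] at this ⊢
        intro y hy hy'
        exact this (Finset.mem_preimage.1 hy) (Finset.mem_preimage.1 hy')
      · apply Finset.eq_univ_of_forall
        intro y
        have : (e y : Fin n) ∈ S := (hrange _).2 ⟨y, rfl⟩
        rw [← h3] at this
        obtain ⟨B, hB, hyB⟩ := Finset.mem_sup.1 this
        refine Finset.mem_sup.2 ⟨g B, Finset.mem_image_of_mem g hB, ?_⟩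
        show y ∈ g B
        rw [hg]
        exact Finset.mem_preimage.2 hyB
    · -- image maps back
      show (σ.image g).map (Finset.mapEmbedding e.toEmbedding).toEmbedding = σ
      rw [Finset.map_eq_image, Finset.image_image]
      have : ∀ B ∈ σ, ((Finset.mapEmbedding e.toEmbedding).toEmbedding ∘ g) B = B := by
        intro B hB
        simp only [Function.comp_apply, Finset.mapEmbedding_apply]
        exact hge B hB
      calc σ.image _ = σ.image id := Finset.image_congr (fun B hB => this B hB)
        _ = σ := Finset.image_id
  · -- value
    intro π hπ
    rw [Finset.prod_map]
    refine Finset.prod_congr rfl fun B hB => ?_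
    change a #B = a #((Finset.mapEmbedding e.toEmbedding) B)
    rw [Finset.mapEmbedding_apply, Finset.card_map]


lemma M_succ (a : ℕ → ℝ) (k : ℕ) :
    M a (k+1) = ∑ i ∈ Finset.range (k+1), (k.choose i : ℝ) * (a (i+1) * M a (k-i)) := by
  classical
  set t : Fin (k+1) := Fin.last k with ht
  have hfacts : ∀ A : Finset (Fin (k+1)), ∀ σ ∈ partsOf (insert t A)ᶜ,
      (∀ B ∈ σ, t ∉ B) ∧ insert t A ∉ σ := by
    intro A σ hσ
    rw [mem_partsOf] at hσ
    have hBsub : ∀ B ∈ σ, B ⊆ (insert t A)ᶜ := by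
      intro B hB
      have := Finset.le_sup (f := id) hB
      rw [hσ.2.2] at this
      exact this
    have htB : ∀ B ∈ σ, t ∉ B := fun B hB h =>
      (Finset.mem_compl.1 (hBsub B hB h)) (Finset.mem_insert_self t A)
    exact ⟨htB, fun h => htB _ h (Finset.mem_insert_self t A)⟩
  have step1 : M a (k+1) =
      ∑ A ∈ ((Finset.univ : Finset (Fin (k+1))).erase t).powerset,
        a (A.card + 1) * ∑ σ ∈ partsOf (insert t A)ᶜ, ∏ B ∈ σ, a B.card := by
    rw [M]
    have hrw : ∀ A ∈ ((Finset.univ : Finset (Fin (k+1))).erase t).powerset,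
        a (A.card + 1) * ∑ σ ∈ partsOf (insert t A)ᶜ, ∏ B ∈ σ, a B.card
          = ∑ σ ∈ partsOf (insert t A)ᶜ, a (A.card + 1) * ∏ B ∈ σ, a B.card :=
      fun A _ => Finset.mul_sum _ _ _
    rw [Finset.sum_congr rfl hrw, Finset.sum_sigma']
    symm
    refine Finset.sum_bij (fun x _ => insert (insert t x.1) x.2) ?_ ?_ ?_ ?_
    · rintro ⟨A, σ⟩ hx
      rw [Finset.mem_sigma, Finset.mem_powerset] at hx
      obtain ⟨hA, hσ⟩ := hx
      obtain ⟨htB, hins⟩ := hfacts A σ hσ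
      rw [mem_partsOf] at hσ
      obtain ⟨h1, h2, h3⟩ := hσ
      have hBsub : ∀ B ∈ σ, B ⊆ (insert t A)ᶜ := by
        intro B hB
        have := Finset.le_sup (f := id) hB
        rwa [h3] at this
      rw [mem_setPartitions]
      refine ⟨?_, ?_, ?_⟩
      · intro B hB
        rcases Finset.mem_insert.1 hB with rfl | hB
        · exact Finset.insert_nonempty t A
        · exact h1 B hB
      · intro B hB C hC hne
        rcases Finset.mem_insert.1 hB with rfl | hB <;>
          rcases Finset.mem_insert.1 hC with rfl | hC
        · exact absurd rfl hne
        · exact disjoint_compl_right.mono_right (hBsub C hC)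
        · exact (disjoint_compl_right.mono_right (hBsub B hB)).symm
        · exact h2 B hB C hC hne
      · rw [Finset.sup_insert, h3]
        show (insert t A) ⊔ (insert t A)ᶜ = Finset.univ
        rw [sup_compl_eq_top]
        rfl
    · rintro ⟨A, σ⟩ hx ⟨A', σ'⟩ hx' h
      replace h : insert (insert t A) σ = insert (insert t A') σ' := h
      rw [Finset.mem_sigma, Finset.mem_powerset] at hx hx'
      obtain ⟨hA, hσ⟩ := hx
      obtain ⟨hA', hσ'⟩ := hx'
      obtain ⟨htB, hins⟩ := hfacts A σ hσ
      obtain ⟨htB', hins'⟩ := hfacts A' σ' hσ'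
      have htA : t ∉ A := fun h => (Finset.mem_erase.1 (hA h)).1 rfl
      have htA' : t ∉ A' := fun h => (Finset.mem_erase.1 (hA' h)).1 rfl
      have hAA : insert t A = insert t A' := by
        have h1 : insert t A' ∈ insert (insert t A) σ := by
          rw [h]; exact Finset.mem_insert_self _ _
        rcases Finset.mem_insert.1 h1 with h1 | h1
        · exact h1.symm
        · exact absurd (Finset.mem_insert_self t A') (htB _ h1)
      have hA2 : A = A' := by
        rw [← Finset.erase_insert htA, ← Finset.erase_insert htA', hAA]
      subst hA2
      have hσ2 : σ = σ' := by
        have e1 := Finset.erase_insert hins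
        have e2 := Finset.erase_insert hins'
        rw [← e1, ← e2, h]
      subst hσ2
      rfl
    · intro π hπ
      rw [mem_setPartitions] at hπ
      obtain ⟨h1, h2, h3⟩ := hπ
      have htmem : t ∈ π.sup id := by rw [h3]; exact Finset.mem_univ t
      obtain ⟨B0, hB0, htB0⟩ := Finset.mem_sup.1 htmem
      have htB0 : t ∈ B0 := htB0
      have hBA : insert t (B0.erase t) = B0 := Finset.insert_erase htB0
      refine ⟨⟨B0.erase t, π.erase B0⟩, ?_, ?_⟩
      · rw [Finset.mem_sigma, Finset.mem_powerset]
        constructor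
        · exact Finset.erase_subset_erase t (Finset.subset_univ B0)
        · rw [mem_partsOf]
          refine ⟨fun B hB => h1 B (Finset.mem_of_mem_erase hB), ?_, ?_⟩
          · intro B hB C hC hne
            exact h2 B (Finset.mem_of_mem_erase hB) C (Finset.mem_of_mem_erase hC) hne
          · rw [hBA]
            ext x
            rw [Finset.mem_sup]
            constructor
            · rintro ⟨B, hB, hxB⟩
              rw [Finset.mem_compl]
              intro hxB0
              have hne := (Finset.mem_erase.1 hB).1
              exact Finset.disjoint_left.1
                (h2 B (Finset.mem_of_mem_erase hB) B0 hB0 hne) hxB hxB0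
            · intro hx
              have hx2 : x ∈ π.sup id := by rw [h3]; exact Finset.mem_univ x
              obtain ⟨B, hB, hxB⟩ := Finset.mem_sup.1 hx2
              refine ⟨B, Finset.mem_erase.2 ⟨?_, hB⟩, hxB⟩
              rintro rfl
              exact (Finset.mem_compl.1 hx) hxB
      · show insert (insert t (B0.erase t)) (π.erase B0) = π
        rw [hBA, Finset.insert_erase hB0]
    · rintro ⟨A, σ⟩ hx
      rw [Finset.mem_sigma, Finset.mem_powerset] at hx
      obtain ⟨hA, hσ⟩ := hx
      obtain ⟨htB, hins⟩ := hfacts A σ hσ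
      have htA : t ∉ A := fun h => (Finset.mem_erase.1 (hA h)).1 rfl
      show a (A.card + 1) * ∏ B ∈ σ, a B.card = ∏ B ∈ insert (insert t A) σ, a B.card
      rw [Finset.prod_insert hins, Finset.card_insert_of_notMem htA]
  rw [step1]
  have hcard : ((Finset.univ : Finset (Fin (k+1))).erase t).card = k := by
    rw [Finset.card_erase_of_mem (Finset.mem_univ t), Finset.card_univ, Fintype.card_fin]
    omega
  rw [Finset.powerset_card_biUnion, Finset.sum_biUnion
    ((Finset.pairwise_disjoint_powersetCard _).set_pairwise _), hcard]
  refine Finset.sum_congr rfl fun i hi => ?_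
  rw [Finset.mem_range] at hi
  have hconst : ∀ A ∈ Finset.powersetCard i ((Finset.univ : Finset (Fin (k+1))).erase t),
      a (A.card + 1) * ∑ σ ∈ partsOf (insert t A)ᶜ, ∏ B ∈ σ, a B.card
        = a (i+1) * M a (k-i) := by
    intro A hA
    rw [Finset.mem_powersetCard] at hA
    obtain ⟨hAsub, hAcard⟩ := hA
    have htA : t ∉ A := fun h => (Finset.mem_erase.1 (hAsub h)).1 rfl
    have hcompl : ((insert t A)ᶜ : Finset (Fin (k+1))).card = k - i := by
      rw [Finset.card_compl, Finset.card_insert_of_notMem htA, hAcard, Fintype.card_fin]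
      omega
    rw [sum_partsOf a _ hcompl, hAcard]
  rw [Finset.sum_congr rfl hconst, Finset.sum_const, Finset.card_powersetCard, hcard]
  rw [nsmul_eq_mul]

section PS
open PowerSeries
lemma coeff_pow_zero_of_lt {f : PowerSeries ℝ} (hf : constantCoeff f = 0) :
    ∀ j n : ℕ, n < j → coeff n (f ^ j) = 0 := by
  intro j
  induction j with
  | zero => intro n h; omega
  | succ j ih =>
    intro n h
    rw [pow_succ, coeff_mul]
    apply Finset.sum_eq_zero
    rintro ⟨i, i'⟩ hmem
    rw [Finset.HasAntidiagonal.mem_antidiagonal] at hmem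
    by_cases hi' : i' = 0
    · subst hi'
      rw [coeff_zero_eq_constantCoeff, hf, mul_zero]
    · have : i < j := by omega
      rw [ih i this, zero_mul]

lemma coeff_expPS (f : PowerSeries ℝ) (m : ℕ) :
    coeff m (expPS f) =
      ∑ j ∈ Finset.range (m + 1), coeff m (f ^ j) / (j.factorial : ℝ) := by
  rw [expPS, coeff_mk]

lemma expPS_rec {f : PowerSeries ℝ} (hf : constantCoeff f = 0) (n : ℕ) :
    ((n : ℝ)+1) * coeff (n+1) (expPS f) =
      ∑ i ∈ Finset.range (n+1), (((i : ℝ)+1) * coeff (i+1) f) *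
        coeff (n-i) (expPS f) := by
  -- the "derivative of a power" identity in coefficient form
  have hD : ∀ j m : ℕ,
      ∑ i ∈ Finset.range (m+1), (((i : ℝ)+1) * coeff (i+1) f) *
          coeff (m-i) (f ^ j)
        = (((m : ℝ)+1) * coeff (m+1) (f ^ (j+1))) / ((j : ℝ)+1) := by
    intro j m
    have hl := Derivation.leibniz_pow (d⁄dX ℝ) (a := f) (j+1)
    have h2 : coeff m ((d⁄dX ℝ) (f ^ (j+1))) = coeff (m+1) (f ^ (j+1)) * ((m : ℝ)+1) := by
      rw [coeff_derivative]
    have h3 : coeff m ((j+1 : ℕ) • f ^ (j+1-1) • (d⁄dX ℝ) f)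
        = ((j : ℝ)+1) * coeff m ((d⁄dX ℝ) f * f ^ j) := by
      rw [map_nsmul, nsmul_eq_mul, smul_eq_mul, Nat.add_sub_cancel, mul_comm (f ^ j) _]
      push_cast
      ring
    have h4 : coeff m ((d⁄dX ℝ) f * f ^ j)
        = ∑ i ∈ Finset.range (m+1), (((i : ℝ)+1) * coeff (i+1) f) *
            coeff (m-i) (f ^ j) := by
      rw [coeff_mul, Finset.Nat.sum_antidiagonal_eq_sum_range_succ_mk]
      refine Finset.sum_congr rfl fun i hi => ?_
      rw [coeff_derivative]
      ring
    have := congrArg (coeff m) hl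
    rw [h2, h3, h4] at this
    have hj : ((j : ℝ)+1) ≠ 0 := by positivity
    rw [eq_div_iff hj]
    linear_combination -this
  -- unfold expPS everywhere
  rw [coeff_expPS]
  have hext : ∀ i ∈ Finset.range (n+1),
      (((i : ℝ)+1) * coeff (i+1) f) * coeff (n-i) (expPS f)
        = ∑ j ∈ Finset.range (n+1),
            (((i : ℝ)+1) * coeff (i+1) f) * (coeff (n-i) (f ^ j) / (j.factorial : ℝ)) := by
    intro i hi
    rw [Finset.mem_range] at hi
    rw [coeff_expPS, Finset.mul_sum]
    apply Finset.sum_subset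
    · apply Finset.range_subset_range.2; omega
    · intro j hj hj'
      rw [Finset.mem_range] at hj
      rw [Finset.mem_range, not_lt] at hj'
      rw [coeff_pow_zero_of_lt hf j (n-i) (by omega), zero_div, mul_zero]
  rw [Finset.sum_congr rfl hext, Finset.sum_comm]
  have hinner : ∀ j ∈ Finset.range (n+1),
      ∑ i ∈ Finset.range (n+1),
          (((i : ℝ)+1) * coeff (i+1) f) * (coeff (n-i) (f ^ j) / (j.factorial : ℝ))
        = ((n : ℝ)+1) * (coeff (n+1) (f ^ (j+1)) / ((j+1).factorial : ℝ)) := by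
    intro j hj
    have : ∑ i ∈ Finset.range (n+1),
        (((i : ℝ)+1) * coeff (i+1) f) * (coeff (n-i) (f ^ j) / (j.factorial : ℝ))
      = (∑ i ∈ Finset.range (n+1),
          (((i : ℝ)+1) * coeff (i+1) f) * coeff (n-i) (f ^ j)) / (j.factorial : ℝ) := by
      rw [Finset.sum_div]
      exact Finset.sum_congr rfl fun i _ => by ring
    rw [this, hD j n, Nat.factorial_succ]
    have h1 : ((j.factorial : ℝ)) ≠ 0 := Nat.cast_ne_zero.2 j.factorial_ne_zero
    have h2 : ((j : ℝ)+1) ≠ 0 := by positivity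
    push_cast
    field_simp
  rw [Finset.sum_congr rfl hinner]
  have h0 : coeff (n+1) (f ^ 0) / ((0).factorial : ℝ) = 0 := by
    rw [pow_zero, coeff_one, if_neg (by omega)]
    simp
  rw [Finset.mul_sum, Finset.sum_range_succ', h0, mul_zero, add_zero]



lemma expPS_eq (a : ℕ → ℝ) :
    expPS (PowerSeries.mk fun l => if l = 0 then 0 else a l / (l.factorial : ℝ)) =
      PowerSeries.mk fun n => if n = 0 then 1 else M a n / (n.factorial : ℝ) := by
  set f := PowerSeries.mk fun l => if l = 0 then 0 else a l / (l.factorial : ℝ) with hfdef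
  have hf0 : constantCoeff f = 0 := by
    rw [hfdef, ← coeff_zero_eq_constantCoeff, coeff_mk, if_pos rfl]
  ext n
  induction n using Nat.strong_induction_on with
  | _ n ih =>
    rw [coeff_mk]
    obtain _ | m := n
    · rw [if_pos rfl, coeff_expPS]
      simp
    · rw [if_neg (Nat.succ_ne_zero m)]
      have hne : ((m : ℝ)+1) ≠ 0 := by positivity
      have hrec := expPS_rec hf0 m
      have hterm : ∀ i ∈ Finset.range (m+1),
          (((i : ℝ)+1) * coeff (i+1) f) * coeff (m-i) (expPS f)
            = (m.choose i : ℝ) * (a (i+1) * M a (m-i)) / (m.factorial : ℝ) := by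
        intro i hi
        rw [Finset.mem_range] at hi
        have h1 : coeff (i+1) f = a (i+1) / ((i+1).factorial : ℝ) := by
          rw [hfdef, coeff_mk, if_neg (Nat.succ_ne_zero i)]
        have h2 : coeff (m-i) (expPS f) = M a (m-i) / (((m-i).factorial : ℝ)) := by
          have h3 := ih (m-i) (by omega)
          rw [coeff_mk] at h3
          rcases Nat.eq_zero_or_pos (m-i) with h | h
          · rw [h] at h3 ⊢
            rw [if_pos rfl] at h3
            rw [h3, M_zero]
            norm_num
          · rw [h3, if_neg (by omega)]
        rw [h1, h2]
        have hc : (m.choose i : ℝ) =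
            (m.factorial : ℝ) / ((i.factorial : ℝ) * (((m-i).factorial : ℝ))) :=
          Nat.cast_choose ℝ (by omega)
        rw [hc, Nat.factorial_succ]
        have e1 : ((i.factorial : ℝ)) ≠ 0 := Nat.cast_ne_zero.2 i.factorial_ne_zero
        have e2 : (((m-i).factorial : ℝ)) ≠ 0 := Nat.cast_ne_zero.2 (m-i).factorial_ne_zero
        have e3 : ((m.factorial : ℝ)) ≠ 0 := Nat.cast_ne_zero.2 m.factorial_ne_zero
        push_cast
        field_simp
      rw [Finset.sum_congr rfl hterm, ← Finset.sum_div, ← M_succ] at hrec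
      have hm : ((m.factorial : ℝ)) ≠ 0 := Nat.cast_ne_zero.2 m.factorial_ne_zero
      rw [Nat.factorial_succ]
      push_cast
      rw [eq_div_iff (by positivity)]
      rw [eq_div_iff hm] at hrec
      linear_combination hrec

lemma M_inj {a b : ℕ → ℝ} (h : ∀ k, 1 ≤ k → M a k = M b k) :
    ∀ l, 1 ≤ l → a l = b l := by
  intro l
  induction l using Nat.strong_induction_on with
  | _ l ih =>
    intro hl
    have hne0 : Nonempty (Fin l) := ⟨⟨0, by omega⟩⟩
    have htriv : ({Finset.univ} : Finset (Finset (Fin l))) ∈ setPartitions l := by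
      rw [mem_setPartitions]
      refine ⟨?_, ?_, ?_⟩
      · intro B hB
        rw [Finset.mem_singleton] at hB
        subst hB
        exact Finset.univ_nonempty
      · intro B hB C hC hne
        rw [Finset.mem_singleton] at hB hC
        subst hB; subst hC
        exact absurd rfl hne
      · rw [Finset.sup_singleton]; rfl
    have hsplit : ∀ d : ℕ → ℝ, M d l =
        d l + ∑ π ∈ (setPartitions l).erase {Finset.univ}, ∏ B ∈ π, d B.card := by
      intro d
      rw [M, ← Finset.add_sum_erase _ _ htriv]
      congr 1
      rw [Finset.prod_singleton, Finset.card_univ, Fintype.card_fin]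
    have hrest : ∀ π ∈ (setPartitions l).erase {Finset.univ},
        ∏ B ∈ π, a B.card = ∏ B ∈ π, b B.card := by
      intro π hπ
      have hne := (Finset.mem_erase.1 hπ).1
      have hπ' := (Finset.mem_erase.1 hπ).2
      rw [mem_setPartitions] at hπ'
      obtain ⟨h1, h2, h3⟩ := hπ'
      refine Finset.prod_congr rfl fun B hB => ?_
      have hcardle : B.card ≤ l := by
        have := Finset.card_le_card (Finset.subset_univ B)
        rwa [Finset.card_univ, Fintype.card_fin] at this
      have hBne : 1 ≤ B.card := Finset.card_pos.2 (h1 B hB)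
      have hlt : B.card < l := by
        rcases lt_or_eq_of_le hcardle with hlt | heq
        · exact hlt
        · exfalso
          have hBuniv : B = Finset.univ := Finset.eq_univ_of_card B
            (by rw [heq, Fintype.card_fin])
          apply hne
          apply Finset.eq_singleton_iff_unique_mem.2
          constructor
          · rw [← hBuniv]; exact hB
          · intro C hC
            by_contra hCne
            have hdisj := h2 C hC B hB (by rw [hBuniv]; exact hCne)
            obtain ⟨x, hx⟩ := h1 C hC
            exact Finset.disjoint_left.1 hdisj hx
              (by rw [hBuniv]; exact Finset.mem_univ x)
      exact ih B.card hlt hBne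
    have hMl := h l hl
    rw [hsplit a, hsplit b, Finset.sum_congr rfl hrest] at hMl
    linarith

lemma tendsto_W {k : ℕ} (π : Finset (Finset (Fin k))) :
    Filter.Tendsto (fun γ : ℝ => Wweight γ π) (nhdsWithin 0 (Set.Ioi 0))
      (nhds (Wweight 0 π)) := by
  have hcont : Continuous fun γ : ℝ => Wweight γ π := by
    unfold Wweight
    apply continuous_finset_prod
    intro B _
    exact continuous_const.mul ((Polynomial.continuous _).comp
      ((continuous_id.add continuous_const).add continuous_const))
  exact (hcont.tendsto 0).mono_left nhdsWithin_le_nhds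

end PS
end GammaAux

/-- suppose `{m_k}` is obtained from the γ-cumulants `{κ_l(γ)}` via
`m_k = Σ_{π ∈ P(k)} W(π) Π_{B ∈ π} κ_{|B|}` (for every `γ > 0`, with the same fixed
moment sequence), that the classical cumulants `{c_l}` of `{m_k}` satisfy
`Σ_{l ≥ 1} c_l y^l / l! = log (1 + Σ_{k ≥ 1} m_k y^k / k!)` (stated in the equivalent
exponential form), and that `κ_l(γ) → κ_l⁰` as `γ → 0⁺`. Then `κ_l⁰ = c_l / (l-1)!`
for every `l ≥ 1`. -/
theorem gamma_cumulants_tend_to_classical (m c κ0 : ℕ → ℝ) (κ : ℝ → ℕ → ℝ)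
    (hmom : ∀ γ : ℝ, 0 < γ → ∀ k : ℕ, 1 ≤ k →
      m k = ∑ π ∈ setPartitions k, Wweight γ π * ∏ B ∈ π, κ γ B.card)
    (hc : expPS (PowerSeries.mk fun l => if l = 0 then 0 else c l / (l.factorial : ℝ)) =
      PowerSeries.mk fun n => if n = 0 then 1 else m n / (n.factorial : ℝ))
    (hlim : ∀ l : ℕ, 1 ≤ l →
      Filter.Tendsto (fun γ : ℝ => κ γ l) (nhdsWithin 0 (Set.Ioi 0)) (nhds (κ0 l))) :
    ∀ l : ℕ, 1 ≤ l → κ0 l = c l / ((l - 1).factorial : ℝ) := by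
  classical
  set c' : ℕ → ℝ := fun j => (((j-1).factorial : ℕ) : ℝ) * κ0 j with hc'
  have hlimit : ∀ k, 1 ≤ k → m k = GammaAux.M c' k := by
    intro k hk
    have htend : Filter.Tendsto
        (fun γ : ℝ => ∑ π ∈ setPartitions k, Wweight γ π * ∏ B ∈ π, κ γ B.card)
        (nhdsWithin 0 (Set.Ioi 0))
        (nhds (∑ π ∈ setPartitions k, Wweight 0 π * ∏ B ∈ π, κ0 B.card)) := by
      apply tendsto_finset_sum
      intro π hπ
      apply Filter.Tendsto.mul (GammaAux.tendsto_W π)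
      apply tendsto_finset_prod
      intro B hB
      apply hlim
      exact Finset.card_pos.2 ((GammaAux.mem_setPartitions.1 hπ).1 B hB)
    have hconst : Filter.Tendsto
        (fun γ : ℝ => ∑ π ∈ setPartitions k, Wweight γ π * ∏ B ∈ π, κ γ B.card)
        (nhdsWithin 0 (Set.Ioi 0)) (nhds (m k)) := by
      have hc0 : Filter.Tendsto (fun _ : ℝ => m k) (nhdsWithin 0 (Set.Ioi 0))
          (nhds (m k)) := tendsto_const_nhds
      refine Filter.Tendsto.congr' ?_ hc0
      filter_upwards [self_mem_nhdsWithin] with γ hγ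
      exact hmom γ hγ k hk
    have hkey := tendsto_nhds_unique hconst htend
    rw [hkey, GammaAux.M]
    refine Finset.sum_congr rfl fun π hπ => ?_
    rw [GammaAux.Wweight_zero π ((GammaAux.mem_setPartitions.1 hπ).1),
      ← Finset.prod_mul_distrib]
  have hmc : ∀ k, 1 ≤ k → m k = GammaAux.M c k := by
    intro k hk
    have h1 := (GammaAux.expPS_eq c).symm.trans hc
    have h2 := congrArg (PowerSeries.coeff k) h1
    rw [PowerSeries.coeff_mk, PowerSeries.coeff_mk, if_neg (by omega),
      if_neg (by omega)] at h2
    have hk0 : ((k.factorial : ℕ) : ℝ) ≠ 0 := Nat.cast_ne_zero.2 k.factorial_ne_zero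
    field_simp at h2
    linarith
  have hcc : ∀ l, 1 ≤ l → c l = c' l :=
    GammaAux.M_inj (fun k hk => (hmc k hk).symm.trans (hlimit k hk))
  intro l hl
  have h2 : c l = (((l-1).factorial : ℕ) : ℝ) * κ0 l := hcc l hl
  have hf : (((l-1).factorial : ℕ) : ℝ) ≠ 0 := Nat.cast_ne_zero.2 (l-1).factorial_ne_zero
  rw [eq_div_iff hf, mul_comm]
  exact h2.symm
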